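/- Let r ≥ 2 and r | n. Then M(T(n,r)) = Σ_{1 ≤ j < j' ≤ r} S_j · S_{j'}, where S_j = Σ_{k=(j−1)n/r+1}^{jn/r} k is the sum of the j-th consecutive block of n/r integers in {1,…,n}. That is, the MinPS of the Turán graph T(n,r) is achieved by assigning the n/r smallest labels to one part, the next n/r labels to another part, and so on. -/

import Mathlib

open Finset

/-- The product-sum M(f) of a vertex labeling: the sum of `f u * f v` over all edges
`{u,v}` of `G`, each edge counted exactly once. -/
noncomputable def prodSum {V : Type*} [Fintype V] (G : SimpleGraph V) (f : V → ℕ) : ℕ := by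
  classical
  exact ∑ e ∈ G.edgeFinset, Sym2.lift ⟨fun u v => f u * f v, fun u v => Nat.mul_comm _ _⟩ e

/-- A labeling of a graph on `V`: a bijection from the vertices onto `{1,…,|V|}`. -/
def IsLabeling (V : Type*) [Fintype V] (f : V → ℕ) : Prop :=
  Set.BijOn f Set.univ (Set.Icc 1 (Fintype.card V))

/-- MinPS of `G`: the minimum of `M(f)` over all labelings `f`. -/
noncomputable def minPS {V : Type*} [Fintype V] (G : SimpleGraph V) : ℕ :=
  sInf { m | ∃ f : V → ℕ, IsLabeling V f ∧ prodSum G f = m }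

/-- The complete `r`-partite graph with all parts of size `l`: vertex `(i, x)` lies in
part `i`, and two vertices are adjacent iff they lie in different parts.  For `r ∣ n`
and `l = n / r`, this is the Turán graph `T(n, r)`. -/
def equiTuranGraph (r l : ℕ) : SimpleGraph (Fin r × Fin l) where
  Adj a b := a.1 ≠ b.1
  symm := ⟨fun a b h => h.symm⟩
  loopless := ⟨fun a h => h rfl⟩

lemma sum_le_top : ∀ (m n : ℕ) (S : Finset ℕ), S ⊆ Finset.Icc 1 n → S.card = m →
    ∑ a ∈ S, a ≤ ∑ a ∈ Finset.Ioc (n - m) n, a := by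
  intro m
  induction m with
  | zero => intro n S hS hc; rw [Finset.card_eq_zero] at hc; simp [hc]
  | succ m ih =>
    intro n S hS hc
    have hne : S.Nonempty := Finset.card_pos.mp (by omega)
    set M := S.max' hne with hM
    have hMS : M ∈ S := S.max'_mem hne
    have hMn : M ≤ n ∧ 1 ≤ M := by
      have := hS hMS; simp only [Finset.mem_Icc] at this; exact ⟨this.2, this.1⟩
    have hn1 : 1 ≤ n := le_trans hMn.2 hMn.1
    have hsub' : S.erase M ⊆ Finset.Icc 1 (n - 1) := by
      intro a ha
      have haS := Finset.mem_of_mem_erase ha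
      have h1 := hS haS; simp only [Finset.mem_Icc] at h1 ⊢
      have : a < M := lt_of_le_of_ne (S.le_max' a haS) (Finset.ne_of_mem_erase ha)
      omega
    have hcard' : (S.erase M).card = m := by rw [Finset.card_erase_of_mem hMS, hc]; rfl
    have key := ih (n - 1) (S.erase M) hsub' hcard'
    have hsum : ∑ a ∈ S, a = M + ∑ a ∈ S.erase M, a := (Finset.add_sum_erase S id hMS).symm
    have hIoc : ∑ a ∈ Finset.Ioc (n - (m+1)) n, a
        = ∑ a ∈ Finset.Ioc (n - 1 - m) (n - 1), a + n := by
      obtain ⟨n', rfl⟩ : ∃ n', n = n' + 1 := ⟨n - 1, by omega⟩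
      have h1 : n' + 1 - (m+1) ≤ n' := by omega
      have h2 : n' + 1 - 1 - m = n' + 1 - (m+1) := by omega
      rw [h2, show n' + 1 - 1 = n' from rfl, Finset.sum_Ioc_succ_top h1]
    omega

lemma abel_sq (r : ℕ) (s b : ℕ → ℤ)
    (hs : ∀ i, i + 1 < r → s i ≤ s (i+1)) (hb : ∀ i, i + 1 < r → b i ≤ b (i+1))
    (hpre : ∀ k, k ≤ r → ∑ j ∈ Finset.range k, b j ≤ ∑ j ∈ Finset.range k, s j)
    (htot : ∑ j ∈ Finset.range r, s j = ∑ j ∈ Finset.range r, b j) :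
    ∑ j ∈ Finset.range r, (s j)^2 ≤ ∑ j ∈ Finset.range r, (b j)^2 := by
  have key : (0:ℤ) ≤ ∑ i ∈ Finset.range r, (b i + s i) * (b i - s i) := by
    have hparts := Finset.sum_range_by_parts (fun i => b i + s i) (fun i => b i - s i) r
    simp only [smul_eq_mul] at hparts
    rw [hparts]
    have h0 : ∑ i ∈ Finset.range r, (b i - s i) = 0 := by
      rw [Finset.sum_sub_distrib]; omega
    rw [h0, mul_zero, zero_sub, neg_nonneg]
    apply Finset.sum_nonpos
    intro i hi
    rw [Finset.mem_range] at hi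
    have h1 : i + 1 < r := by omega
    have hc : 0 ≤ (b (i+1) + s (i+1)) - (b i + s i) := by
      have := hs i h1; have := hb i h1; omega
    have hd : ∑ j ∈ Finset.range (i+1), (b j - s j) ≤ 0 := by
      rw [Finset.sum_sub_distrib]
      have := hpre (i+1) (by omega); omega
    exact mul_nonpos_of_nonneg_of_nonpos hc hd
  have expand : ∑ i ∈ Finset.range r, (b i + s i) * (b i - s i)
      = ∑ i ∈ Finset.range r, (b i)^2 - ∑ i ∈ Finset.range r, (s i)^2 := by
    rw [← Finset.sum_sub_distrib]
    apply Finset.sum_congr rfl; intro i _; ring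
  omega

-- block sums: consecutive Ioc blocks
lemma blocks_sum (l : ℕ) : ∀ (k r : ℕ), k ≤ r →
    ∑ j ∈ Finset.Ico k r, (∑ a ∈ Finset.Ioc (j*l) ((j+1)*l), a) =
      ∑ a ∈ Finset.Ioc (k*l) (r*l), a := by
  intro k r h
  induction r, h using Nat.le_induction with
  | base => simp
  | succ r hkr ih =>
    rw [Finset.sum_Ico_succ_top hkr, ih]
    exact Finset.sum_Ioc_consecutive _ (Nat.mul_le_mul_right l hkr)
      (Nat.mul_le_mul_right l (Nat.le_succ r))

-- block sums are monotone
lemma blocks_mono (l i : ℕ) :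
    (∑ a ∈ Finset.Ioc (i*l) ((i+1)*l), a) ≤ ∑ a ∈ Finset.Ioc ((i+1)*l) ((i+2)*l), a := by
  have h : Finset.Ioc ((i+1)*l) ((i+2)*l) = (Finset.Ioc (i*l) ((i+1)*l)).map
      (addRightEmbedding l) := by
    rw [Finset.map_add_right_Ioc]
    congr 1 <;> ring
  rw [h, Finset.sum_map]
  apply Finset.sum_le_sum
  intro a _
  simp [addRightEmbedding]

lemma core_ineq (r l : ℕ) (A : Fin r → Finset ℕ)
    (hsub : ∀ j, A j ⊆ Finset.Icc 1 (r*l)) (hcard : ∀ j, (A j).card = l)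
    (hdisj : ∀ j k, j ≠ k → Disjoint (A j) (A k)) :
    ∑ j : Fin r, (∑ a ∈ A j, a)^2 ≤ ∑ j : Fin r, (∑ a ∈ Finset.Ioc (j.val*l) ((j.val+1)*l), a)^2 := by
  set S : Fin r → ℕ := fun j => ∑ a ∈ A j, a with hS
  have union_bound : ∀ K : Finset (Fin r),
      ∑ j ∈ K, S j ≤ ∑ a ∈ Finset.Ioc (r*l - K.card * l) (r*l), a := by
    intro K
    have hd : (K : Set (Fin r)).PairwiseDisjoint A := fun x _ y _ hxy => hdisj x y hxy
    have h1 : ∑ j ∈ K, S j = ∑ a ∈ K.biUnion A, a := (Finset.sum_biUnion hd).symm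
    have h2 : (K.biUnion A).card = K.card * l := by
      rw [Finset.card_biUnion (fun x _ y _ hxy => hdisj x y hxy)]
      simp [hcard, Finset.sum_const, Nat.smul_one_eq_cast]
    have h3 : K.biUnion A ⊆ Finset.Icc 1 (r*l) := by
      intro a ha; rw [Finset.mem_biUnion] at ha; obtain ⟨j, _, hj⟩ := ha; exact hsub j hj
    rw [h1]
    exact sum_le_top _ _ _ h3 h2
  have htotal : ∑ j : Fin r, S j = ∑ a ∈ Finset.Icc 1 (r*l), a := by
    have hd : ((Finset.univ : Finset (Fin r)) : Set (Fin r)).PairwiseDisjoint A :=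
      fun x _ y _ hxy => hdisj x y hxy
    have h1 : ∑ j : Fin r, S j = ∑ a ∈ Finset.univ.biUnion A, a := (Finset.sum_biUnion hd).symm
    have h2 : (Finset.univ.biUnion A).card = r * l := by
      rw [Finset.card_biUnion (fun x _ y _ hxy => hdisj x y hxy)]
      simp [hcard, Finset.sum_const, mul_comm]
    have h3 : Finset.univ.biUnion A ⊆ Finset.Icc 1 (r*l) := by
      intro a ha; rw [Finset.mem_biUnion] at ha; obtain ⟨j, _, hj⟩ := ha; exact hsub j hj
    have h4 : Finset.univ.biUnion A = Finset.Icc 1 (r*l) := by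
      apply Finset.eq_of_subset_of_card_le h3
      rw [h2, Nat.card_Icc]; omega
    rw [h1, h4]
  set σ := Tuple.sort S with hσ
  have hmono : Monotone (S ∘ σ) := Tuple.monotone_sort S
  set sZ : ℕ → ℤ := fun i => if h : i < r then ((S (σ ⟨i, h⟩) : ℕ) : ℤ) else 0 with hsZ
  set bZ : ℕ → ℤ := fun i => ((∑ a ∈ Finset.Ioc (i*l) ((i+1)*l), a : ℕ) : ℤ) with hbZ
  have hrange_s : ∑ i ∈ Finset.range r, sZ i = ∑ j : Fin r, ((S j : ℕ) : ℤ) := by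
    rw [Finset.sum_range fun i => sZ i]
    rw [show (fun (i : Fin r) => sZ i.val) = fun i : Fin r => ((S (σ i) : ℕ) : ℤ) by
      funext i; simp [hsZ, i.isLt, Fin.eta]]
    exact Equiv.sum_comp σ (fun j => ((S j : ℕ) : ℤ))
  have hrange_s2 : ∑ i ∈ Finset.range r, (sZ i)^2 = ∑ j : Fin r, ((S j : ℕ) : ℤ)^2 := by
    rw [Finset.sum_range fun i => (sZ i)^2]
    rw [show (fun (i : Fin r) => (sZ i.val)^2) = fun i : Fin r => ((S (σ i) : ℕ) : ℤ)^2 by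
      funext i; simp [hsZ, i.isLt, Fin.eta]]
    exact Equiv.sum_comp σ (fun j => ((S j : ℕ) : ℤ)^2)
  have hrange_b : ∀ k, k ≤ r → ∑ i ∈ Finset.Ico k r, bZ i
      = ((∑ a ∈ Finset.Ioc (k*l) (r*l), a : ℕ) : ℤ) := by
    intro k hk
    rw [← blocks_sum l k r hk]
    simp only [hbZ]
    push_cast
    rfl
  -- tail bound
  have tail : ∀ k, k ≤ r → ∑ j ∈ Finset.Ico k r, sZ j ≤ ∑ j ∈ Finset.Ico k r, bZ j := by
    intro k hk
    set K : Finset (Fin r) := Finset.univ.filter (fun j : Fin r => k ≤ j.val) with hK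
    have hKmap : K.map Fin.valEmbedding = Finset.Ico k r := by
      ext i
      simp only [hK, Finset.mem_map, Finset.mem_filter, Finset.mem_univ, true_and,
        Fin.valEmbedding_apply, Finset.mem_Ico]
      constructor
      · rintro ⟨j, hj, rfl⟩; exact ⟨hj, j.isLt⟩
      · rintro ⟨h1, h2⟩; exact ⟨⟨i, h2⟩, h1, rfl⟩
    have hKcard : K.card = r - k := by
      have := Finset.card_map (f := Fin.valEmbedding) (s := K)
      rw [hKmap] at this; rw [← this, Nat.card_Ico]
    have hlhs : ∑ j ∈ Finset.Ico k r, sZ j = ((∑ j ∈ K.image σ, S j : ℕ) : ℤ) := by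
      rw [← hKmap, Finset.sum_map]
      rw [Finset.sum_image (fun x _ y _ h => σ.injective h)]
      push_cast
      apply Finset.sum_congr rfl
      intro j _
      simp [hsZ, j.isLt, Fin.eta]
    have hcard2 : (K.image σ).card = r - k := by
      rw [Finset.card_image_of_injective _ σ.injective, hKcard]
    have hub := union_bound (K.image σ)
    rw [hcard2] at hub
    have harith : r * l - (r - k) * l = k * l := by
      have h1 : (r - k) * l + k * l = r * l := by
        rw [← Nat.add_mul]; congr 1; omega
      omega
    rw [harith] at hub
    rw [hlhs, hrange_b k hk]
    exact_mod_cast hub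
  have htotS : ∑ i ∈ Finset.range r, sZ i = ∑ i ∈ Finset.range r, bZ i := by
    have hb0 : ∑ i ∈ Finset.range r, bZ i = ((∑ a ∈ Finset.Ioc (0*l) (r*l), a : ℕ) : ℤ) := by
      rw [Finset.range_eq_Ico]; exact hrange_b 0 (Nat.zero_le r)
    rw [hb0, hrange_s,
      show ∑ j : Fin r, ((S j : ℕ):ℤ) = ((∑ j : Fin r, S j : ℕ) : ℤ) from by push_cast; rfl,
      htotal]
    congr 1
    apply Finset.sum_congr _ (fun _ _ => rfl)
    ext a
    simp only [Finset.mem_Ioc, Finset.mem_Icc]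
    omega
  have hpre : ∀ k, k ≤ r → ∑ j ∈ Finset.range k, bZ j ≤ ∑ j ∈ Finset.range k, sZ j := by
    intro k hk
    have hs' : ∑ j ∈ Finset.range k, sZ j + ∑ j ∈ Finset.Ico k r, sZ j
        = ∑ j ∈ Finset.range r, sZ j := Finset.sum_range_add_sum_Ico _ hk
    have hb' : ∑ j ∈ Finset.range k, bZ j + ∑ j ∈ Finset.Ico k r, bZ j
        = ∑ j ∈ Finset.range r, bZ j := Finset.sum_range_add_sum_Ico _ hk
    have := tail k hk
    omega
  have hsmono : ∀ i, i + 1 < r → sZ i ≤ sZ (i+1) := by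
    intro i hi
    have h1 : i < r := by omega
    simp only [hsZ, hi, h1, dif_pos]
    exact_mod_cast hmono (show (⟨i, h1⟩ : Fin r) ≤ ⟨i+1, hi⟩ by simp [Fin.le_def])
  have hbmono : ∀ i, i + 1 < r → bZ i ≤ bZ (i+1) := by
    intro i _
    simp only [hbZ]
    have := blocks_mono l i
    have h2 : (i+2) = (i+1)+1 := rfl
    exact_mod_cast (by rw [show i+1+1 = i+2 from rfl]; exact this :
      (∑ a ∈ Finset.Ioc (i*l) ((i+1)*l), a) ≤ ∑ a ∈ Finset.Ioc ((i+1)*l) ((i+1+1)*l), a)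
  have habel := abel_sq r sZ bZ hsmono hbmono hpre htotS
  rw [hrange_s2] at habel
  have hrb2 : ∑ i ∈ Finset.range r, (bZ i)^2
      = ∑ j : Fin r, ((∑ a ∈ Finset.Ioc (j.val*l) ((j.val+1)*l), a : ℕ) : ℤ)^2 := by
    rw [Finset.sum_range fun i => (bZ i)^2]
  rw [hrb2] at habel
  exact_mod_cast habel

lemma sq_identity {r : ℕ} (g : Fin r → ℕ) :
    2 * (∑ p ∈ (Finset.univ ×ˢ Finset.univ : Finset (Fin r × Fin r)).filter
        (fun p => p.1 < p.2), g p.1 * g p.2) + ∑ j : Fin r, (g j)^2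
      = (∑ j : Fin r, g j)^2 := by
  have swap_eq : ∑ p ∈ (Finset.univ ×ˢ Finset.univ : Finset (Fin r × Fin r)).filter
        (fun p => p.2 < p.1), g p.1 * g p.2
      = ∑ p ∈ (Finset.univ ×ˢ Finset.univ : Finset (Fin r × Fin r)).filter
        (fun p => p.1 < p.2), g p.1 * g p.2 := by
    apply Finset.sum_nbij' (i := Prod.swap) (j := Prod.swap)
    · intro p hp; simp only [Finset.mem_filter, Finset.mem_product] at hp ⊢
      exact ⟨⟨Finset.mem_univ _, Finset.mem_univ _⟩, hp.2⟩
    · intro p hp; simp only [Finset.mem_filter, Finset.mem_product] at hp ⊢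
      exact ⟨⟨Finset.mem_univ _, Finset.mem_univ _⟩, hp.2⟩
    · intro p _; simp
    · intro p _; simp
    · intro p _; simp [mul_comm]
  have diag_eq : ∑ p ∈ (Finset.univ ×ˢ Finset.univ : Finset (Fin r × Fin r)).filter
        (fun p => p.1 = p.2), g p.1 * g p.2 = ∑ j : Fin r, (g j)^2 := by
    apply Finset.sum_nbij' (i := Prod.fst) (j := fun j => (j, j))
    · intro p _; exact Finset.mem_univ _
    · intro j _; simp
    · intro p hp; simp only [Finset.mem_filter] at hp; ext <;> simp [hp.2]
    · intro j _; rfl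
    · intro p hp; simp only [Finset.mem_filter] at hp; rw [← hp.2, sq]
  have expand : (∑ j : Fin r, g j)^2
      = ∑ p ∈ (Finset.univ ×ˢ Finset.univ : Finset (Fin r × Fin r)), g p.1 * g p.2 := by
    rw [sq, Finset.sum_mul_sum, ← Finset.sum_product']
  have split1 := Finset.sum_filter_add_sum_filter_not
    (Finset.univ ×ˢ Finset.univ : Finset (Fin r × Fin r)) (fun p => p.1 < p.2)
    (fun p => g p.1 * g p.2)
  have split2 := Finset.sum_filter_add_sum_filter_not
    ((Finset.univ ×ˢ Finset.univ : Finset (Fin r × Fin r)).filter (fun p => ¬ p.1 < p.2))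
    (fun p => p.2 < p.1) (fun p => g p.1 * g p.2)
  have e1 : ((Finset.univ ×ˢ Finset.univ : Finset (Fin r × Fin r)).filter
        (fun p => ¬ p.1 < p.2)).filter (fun p => p.2 < p.1)
      = (Finset.univ ×ˢ Finset.univ : Finset (Fin r × Fin r)).filter (fun p => p.2 < p.1) := by
    rw [Finset.filter_filter]
    apply Finset.filter_congr
    intro p _
    constructor
    · rintro ⟨_, h⟩; exact h
    · intro h; exact ⟨not_lt.mpr h.le, h⟩
  have e2 : ((Finset.univ ×ˢ Finset.univ : Finset (Fin r × Fin r)).filter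
        (fun p => ¬ p.1 < p.2)).filter (fun p => ¬ p.2 < p.1)
      = (Finset.univ ×ˢ Finset.univ : Finset (Fin r × Fin r)).filter (fun p => p.1 = p.2) := by
    rw [Finset.filter_filter]
    apply Finset.filter_congr
    intro p _
    constructor
    · rintro ⟨h1, h2⟩; exact le_antisymm (not_lt.mp h2) (not_lt.mp h1)
    · intro h; exact ⟨by rw [h]; exact lt_irrefl _, by rw [h]; exact lt_irrefl _⟩
  rw [e1, e2] at split2
  rw [expand, ← split1, ← split2, swap_eq, diag_eq]
  ring

lemma prodSum_turan (r l : ℕ) (f : Fin r × Fin l → ℕ) :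
    prodSum (equiTuranGraph r l) f
      = ∑ p ∈ (Finset.univ ×ˢ Finset.univ : Finset (Fin r × Fin r)).filter
          (fun p => p.1 < p.2), (∑ x : Fin l, f (p.1, x)) * (∑ x : Fin l, f (p.2, x)) := by
  classical
  have step1 : prodSum (equiTuranGraph r l) f
      = ∑ q ∈ (Finset.univ ×ˢ Finset.univ :
            Finset ((Fin r × Fin l) × (Fin r × Fin l))).filter (fun q => q.1.1 < q.2.1),
          f q.1 * f q.2 := by
    unfold prodSum
    symm
    apply Finset.sum_bij (i := fun (q : (Fin r × Fin l) × (Fin r × Fin l)) _ => Sym2.mk q.1 q.2)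
    · intro q hq
      simp only [Finset.mem_filter, Finset.mem_product] at hq
      rw [SimpleGraph.mem_edgeFinset, SimpleGraph.mem_edgeSet]
      exact Fin.ne_of_lt hq.2
    · intro q hq q' hq' h
      simp only [Finset.mem_filter, Finset.mem_product] at hq hq'
      rw [Sym2.eq, Sym2.rel_iff'] at h
      rcases h with h | h
      · exact Prod.ext_iff.mpr ⟨congrArg Prod.fst h, congrArg Prod.snd h⟩
      · exfalso
        have h1 : q.1 = q'.2 := congrArg Prod.fst h
        have h2 : q.2 = q'.1 := congrArg Prod.snd h
        rw [h1, h2] at hq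
        exact absurd hq'.2 (not_lt.mpr (le_of_lt hq.2))
    · intro e he
      rw [SimpleGraph.mem_edgeFinset] at he
      induction e with
      | _ u v =>
        rw [SimpleGraph.mem_edgeSet] at he
        change u.1 ≠ v.1 at he
        rcases lt_or_gt_of_ne he with h | h
        · exact ⟨(u, v), by simp [Finset.mem_filter, h], rfl⟩
        · exact ⟨(v, u), by simp [Finset.mem_filter, h], Sym2.eq_swap⟩
    · intro q _
      rw [Sym2.lift_mk]
  rw [step1, Finset.sum_filter, Finset.sum_filter, Finset.sum_product, Finset.sum_product]
  rw [Fintype.sum_prod_type]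
  apply Finset.sum_congr rfl
  intro j _
  rw [Finset.sum_comm]
  rw [Fintype.sum_prod_type]
  apply Finset.sum_congr rfl
  intro j' _
  by_cases h : j < j'
  · simp only [h, if_true]
    rw [Finset.sum_mul_sum]
    rw [Finset.sum_comm]
  · simp only [h, if_false]
    simp

lemma range_block_sum (c l : ℕ) : ∑ x ∈ Finset.range l, (c + x + 1) = ∑ a ∈ Finset.Ioc c (c + l), a := by
  apply Finset.sum_nbij' (i := fun x => c + x + 1) (j := fun a => a - c - 1)
  · intro x hx; rw [Finset.mem_range] at hx; rw [Finset.mem_Ioc]; omega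
  · intro a ha; rw [Finset.mem_Ioc] at ha; rw [Finset.mem_range]; omega
  · intro x _; omega
  · intro a ha; rw [Finset.mem_Ioc] at ha; omega
  · intro x _; rfl

-- the canonical block labeling
lemma f0_labeling (r l : ℕ) :
    IsLabeling (Fin r × Fin l) (fun p => p.1.val * l + p.2.val + 1) := by
  have hcard : Fintype.card (Fin r × Fin l) = r * l := by simp
  rw [IsLabeling, hcard]
  refine ⟨?_, ?_, ?_⟩
  · intro p _
    simp only [Set.mem_Icc]
    have h1 : p.1.val + 1 ≤ r := p.1.isLt
    have h2 : (p.1.val + 1) * l ≤ r * l := Nat.mul_le_mul_right l h1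
    have h3 : p.2.val < l := p.2.isLt
    have h4 : (p.1.val + 1) * l = p.1.val * l + l := by ring
    omega
  · intro p _ q _ h
    simp only at h
    have hj : p.1.val = q.1.val := by
      by_contra hne
      rcases Nat.lt_or_ge p.1.val q.1.val with hlt | hge
      · have : (p.1.val + 1) * l ≤ q.1.val * l := Nat.mul_le_mul_right l (by omega)
        have h4 : (p.1.val + 1) * l = p.1.val * l + l := by ring
        have := p.2.isLt
        omega
      · have hlt : q.1.val < p.1.val := by omega
        have : (q.1.val + 1) * l ≤ p.1.val * l := Nat.mul_le_mul_right l (by omega)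
        have h4 : (q.1.val + 1) * l = q.1.val * l + l := by ring
        have := q.2.isLt
        omega
    have hx : p.2.val = q.2.val := by
      rw [hj] at h; omega
    exact Prod.ext (Fin.ext hj) (Fin.ext hx)
  · intro k hk
    simp only [Set.mem_Icc] at hk
    have hl : 0 < l := by
      rcases Nat.eq_zero_or_pos l with h | h
      · exfalso; rw [h, mul_zero] at hk; omega
      · exact h
    have hk1 : k - 1 < r * l := by omega
    have hq : (k - 1) / l < r := Nat.div_lt_iff_lt_mul hl |>.mpr (by omega)
    refine ⟨(⟨(k-1)/l, hq⟩, ⟨(k-1) % l, Nat.mod_lt _ hl⟩), Set.mem_univ _, ?_⟩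
    simp only
    have := Nat.div_add_mod (k-1) l
    have h2 : (k-1)/l * l = l * ((k-1)/l) := mul_comm _ _
    omega


/-- For `r ≥ 2` and `r ∣ n`, the MinPS of the Turán graph `T(n,r)` equals
`Σ_{1 ≤ j < j' ≤ r} S_j · S_{j'}`, where `S_j` is the sum of the `j`-th consecutive block of
`n/r` integers in `{1,…,n}` (here parts are indexed by `j = 0,…,r−1`, and
`S_j = Σ_{k = j·(n/r)+1}^{(j+1)·(n/r)} k`). -/
theorem statement7 (n r : ℕ) (hr : 2 ≤ r) (hdvd : r ∣ n) :
    minPS (equiTuranGraph r (n / r)) =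
      ∑ p ∈ (Finset.range r ×ˢ Finset.range r).filter (fun p => p.1 < p.2),
        (∑ k ∈ Finset.Icc (p.1 * (n / r) + 1) ((p.1 + 1) * (n / r)), k) *
          (∑ k ∈ Finset.Icc (p.2 * (n / r) + 1) ((p.2 + 1) * (n / r)), k) := by
  classical
  set l := n / r with hl
  have hr0 : 0 < r := by omega
  set B : Fin r → ℕ := fun j => ∑ a ∈ Finset.Ioc (j.val*l) ((j.val+1)*l), a with hB
  -- RHS conversion
  have rhs_eq : ∑ p ∈ (Finset.range r ×ˢ Finset.range r).filter (fun p => p.1 < p.2),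
        (∑ k ∈ Finset.Icc (p.1 * l + 1) ((p.1 + 1) * l), k) *
          (∑ k ∈ Finset.Icc (p.2 * l + 1) ((p.2 + 1) * l), k)
      = ∑ p ∈ (Finset.univ ×ˢ Finset.univ : Finset (Fin r × Fin r)).filter
          (fun p => p.1 < p.2), B p.1 * B p.2 := by
    apply Finset.sum_nbij' (i := fun p => ((⟨p.1 % r, Nat.mod_lt _ hr0⟩ : Fin r),
        (⟨p.2 % r, Nat.mod_lt _ hr0⟩ : Fin r)))
      (j := fun p => (p.1.val, p.2.val))
    · intro p hp
      simp only [Finset.mem_filter, Finset.mem_product, Finset.mem_range] at hp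
      simp only [Finset.mem_filter, Finset.mem_product, Finset.mem_univ, true_and]
      rw [Fin.lt_def]
      simp only
      rw [Nat.mod_eq_of_lt hp.1.1, Nat.mod_eq_of_lt hp.1.2]
      exact hp.2
    · intro p hp
      simp only [Finset.mem_filter, Finset.mem_product, Finset.mem_univ, true_and] at hp
      simp only [Finset.mem_filter, Finset.mem_product, Finset.mem_range]
      exact ⟨⟨p.1.isLt, p.2.isLt⟩, hp⟩
    · intro p hp
      simp only [Finset.mem_filter, Finset.mem_product, Finset.mem_range] at hp
      simp only [Nat.mod_eq_of_lt hp.1.1, Nat.mod_eq_of_lt hp.1.2]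
    · intro p _
      simp only [Nat.mod_eq_of_lt p.1.isLt, Nat.mod_eq_of_lt p.2.isLt, Fin.eta]
    · intro p hp
      simp only [Finset.mem_filter, Finset.mem_product, Finset.mem_range] at hp
      simp only [hB, Nat.mod_eq_of_lt hp.1.1, Nat.mod_eq_of_lt hp.1.2]
      rw [Finset.Icc_add_one_left_eq_Ioc, Finset.Icc_add_one_left_eq_Ioc]
  rw [rhs_eq]
  -- the block labeling and its part sums
  set f0 : Fin r × Fin l → ℕ := fun p => p.1.val * l + p.2.val + 1 with hf0
  have hlab0 : IsLabeling (Fin r × Fin l) f0 := f0_labeling r l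
  have hparts0 : ∀ j : Fin r, (∑ x : Fin l, f0 (j, x)) = B j := by
    intro j
    simp only [hf0, hB]
    rw [Fin.sum_univ_eq_sum_range (fun x => j.val * l + x + 1)]
    rw [range_block_sum]
    congr 1
    ring
  have hval0 : prodSum (equiTuranGraph r l) f0
      = ∑ p ∈ (Finset.univ ×ˢ Finset.univ : Finset (Fin r × Fin r)).filter
          (fun p => p.1 < p.2), B p.1 * B p.2 := by
    rw [prodSum_turan]
    apply Finset.sum_congr rfl
    intro p _
    rw [hparts0, hparts0]
  -- sum of all blocks
  have hBtot : ∑ j : Fin r, B j = ∑ a ∈ Finset.Icc 1 (r*l), a := by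
    rw [show ∑ j : Fin r, B j = ∑ i ∈ Finset.range r,
        (∑ a ∈ Finset.Ioc (i*l) ((i+1)*l), a) from
      (Fin.sum_univ_eq_sum_range (fun i => ∑ a ∈ Finset.Ioc (i*l) ((i+1)*l), a) r)]
    rw [Finset.range_eq_Ico, blocks_sum l 0 r (Nat.zero_le r)]
    apply Finset.sum_congr _ (fun _ _ => rfl)
    ext a
    simp only [Finset.mem_Ioc, Finset.mem_Icc]
    omega
  -- lower bound for any labeling
  have lower : ∀ f : Fin r × Fin l → ℕ, IsLabeling (Fin r × Fin l) f →
      (∑ p ∈ (Finset.univ ×ˢ Finset.univ : Finset (Fin r × Fin r)).filter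
          (fun p => p.1 < p.2), B p.1 * B p.2) ≤ prodSum (equiTuranGraph r l) f := by
    intro f hf
    have hcardV : Fintype.card (Fin r × Fin l) = r * l := by simp
    rw [IsLabeling, hcardV] at hf
    have hinj : Function.Injective f := by
      have := hf.injOn
      intro a b h
      exact this (Set.mem_univ a) (Set.mem_univ b) h
    set A : Fin r → Finset ℕ := fun j => Finset.image (fun x => f (j, x)) Finset.univ with hA
    have hsub : ∀ j, A j ⊆ Finset.Icc 1 (r*l) := by
      intro j a ha
      simp only [hA, Finset.mem_image] at ha
      obtain ⟨x, _, rfl⟩ := ha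
      have := hf.mapsTo (Set.mem_univ (j, x))
      rw [Set.mem_Icc] at this
      rw [Finset.mem_Icc]
      exact this
    have hcard : ∀ j, (A j).card = l := by
      intro j
      rw [hA]
      rw [Finset.card_image_of_injective _ (fun x y h => by
        have := hinj h; exact (Prod.ext_iff.mp this).2)]
      simp
    have hdisj : ∀ j k, j ≠ k → Disjoint (A j) (A k) := by
      intro j k hjk
      rw [Finset.disjoint_left]
      intro a haj hak
      simp only [hA, Finset.mem_image] at haj hak
      obtain ⟨x, _, hx⟩ := haj
      obtain ⟨y, _, hy⟩ := hak
      have := hinj (hx.trans hy.symm)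
      exact hjk (Prod.ext_iff.mp this).1
    have hSA : ∀ j, (∑ a ∈ A j, a) = ∑ x : Fin l, f (j, x) := by
      intro j
      rw [hA, Finset.sum_image (fun x _ y _ h => by
        have := hinj h; exact (Prod.ext_iff.mp this).2)]
    set Sf : Fin r → ℕ := fun j => ∑ x : Fin l, f (j, x) with hSf
    have hsq : ∑ j : Fin r, (Sf j)^2 ≤ ∑ j : Fin r, (B j)^2 := by
      have := core_ineq r l A hsub hcard hdisj
      simp only [hSA] at this
      exact this
    have hStot : ∑ j : Fin r, Sf j = ∑ j : Fin r, B j := by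
      rw [hBtot]
      have hd : ((Finset.univ : Finset (Fin r)) : Set (Fin r)).PairwiseDisjoint A :=
        fun x _ y _ hxy => hdisj x y hxy
      have h1 : ∑ j : Fin r, Sf j = ∑ a ∈ Finset.univ.biUnion A, a := by
        rw [show ∑ j : Fin r, Sf j = ∑ j : Fin r, ∑ a ∈ A j, a from
          Finset.sum_congr rfl (fun j _ => (hSA j).symm)]
        exact (Finset.sum_biUnion hd).symm
      have h2 : (Finset.univ.biUnion A).card = r * l := by
        rw [Finset.card_biUnion (fun x _ y _ hxy => hdisj x y hxy)]
        simp [hcard, mul_comm]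
      have h4 : Finset.univ.biUnion A = Finset.Icc 1 (r*l) := by
        apply Finset.eq_of_subset_of_card_le
        · intro a ha; rw [Finset.mem_biUnion] at ha; obtain ⟨j, _, hj⟩ := ha; exact hsub j hj
        · rw [h2, Nat.card_Icc]; omega
      rw [h1, h4]
    rw [prodSum_turan]
    have hconv : ∑ p ∈ (Finset.univ ×ˢ Finset.univ : Finset (Fin r × Fin r)).filter
          (fun p => p.1 < p.2), (∑ x : Fin l, f (p.1, x)) * (∑ x : Fin l, f (p.2, x))
        = ∑ p ∈ (Finset.univ ×ˢ Finset.univ : Finset (Fin r × Fin r)).filter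
          (fun p => p.1 < p.2), Sf p.1 * Sf p.2 := Finset.sum_congr rfl (fun p _ => rfl)
    rw [hconv]
    have id1 := sq_identity Sf
    have id2 := sq_identity B
    rw [hStot] at id1
    omega
  -- conclude
  apply le_antisymm
  · exact Nat.sInf_le ⟨f0, hlab0, hval0⟩
  · refine le_csInf ⟨prodSum (equiTuranGraph r l) f0, f0, hlab0, rfl⟩ ?_
    rintro m ⟨f, hf, rfl⟩
    exact lower f hf
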